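/- Fix an integer ℓ ≥ 1, real weights γ_k ≥ 0 for k ∈ {−ℓ,…,ℓ−1}, and λ > 0. Let (ρ_j^0)_{j∈ℤ} satisfy ρ_j^0 ≥ 0 for every j, ρ_j^0 = 0 for every j ≥ 0, and ρ_{−1}^0 > 0. Define c_j^0 = Σ_{k=−ℓ}^{ℓ−1} γ_k ρ_{j−k}^0 and compute one step of the nonlocal Lax–Friedrichs scheme: ρ_j^1 = (1/2)(ρ_{j+1}^0 + ρ_{j−1}^0) − (λ/2)(ρ_{j+1}^0 c_{j+1}^0 − ρ_{j−1}^0 c_{j−1}^0). Then ρ_0^1 ≥ (1/2) ρ_{−1}^0 > 0. That is, the Lax–Friedrichs type scheme immediately spreads the support of a nonnegative discrete solution to the right, regardless of the quadrature weights. -/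
import Mathlib


/-- The discrete convolution `c_j = Σ_{k=−ℓ}^{ℓ−1} γ_k ρ_{j−k}`. -/
noncomputable def discConv (ℓ : ℕ) (γ : ℤ → ℝ) (ρ : ℤ → ℝ) (j : ℤ) : ℝ :=
  ∑ k ∈ Finset.Icc (-(ℓ:ℤ)) ((ℓ:ℤ) - 1), γ k * ρ (j - k)

/-- One step of the nonlocal Lax–Friedrichs scheme:
`ρ_j ↦ (1/2)(ρ_{j+1} + ρ_{j−1}) − (λ/2)(ρ_{j+1} c_{j+1} − ρ_{j−1} c_{j−1})`. -/
noncomputable def lfStep (ℓ : ℕ) (γ : ℤ → ℝ) (lam : ℝ) (ρ : ℤ → ℝ) (j : ℤ) : ℝ :=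
  (1/2) * (ρ (j + 1) + ρ (j - 1))
    - (lam/2) * (ρ (j + 1) * discConv ℓ γ ρ (j + 1) - ρ (j - 1) * discConv ℓ γ ρ (j - 1))

/-- The nonlocal Lax–Friedrichs scheme immediately spreads the support of a nonnegative
discrete solution to the right: if `ρ⁰ ≥ 0` vanishes on the nonnegative indices and
`ρ⁰_{−1} > 0`, then after one step `ρ¹_0 ≥ (1/2)ρ⁰_{−1} > 0`. -/
theorem laxFriedrichs_spreads_support (ℓ : ℕ) (hℓ : 1 ≤ ℓ)
    (γ : ℤ → ℝ) (hγ_nonneg : ∀ k ∈ Finset.Icc (-(ℓ:ℤ)) ((ℓ:ℤ) - 1), 0 ≤ γ k)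
    (lam : ℝ) (hlam : 0 < lam) (ρ : ℤ → ℝ) (hρ_nonneg : ∀ j, 0 ≤ ρ j)
    (hρ_zero : ∀ j : ℤ, 0 ≤ j → ρ j = 0) (hρ_neg : 0 < ρ (-1)) :
    (1/2) * ρ (-1) ≤ lfStep ℓ γ lam ρ 0 ∧ 0 < (1/2) * ρ (-1) := by
  have h1 : ρ (0 + 1) = 0 := hρ_zero 1 (by norm_num)
  have hc : 0 ≤ discConv ℓ γ ρ (0 - 1) := by
    apply Finset.sum_nonneg
    intro k hk
    exact mul_nonneg (hγ_nonneg k hk) (hρ_nonneg _)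
  constructor
  · unfold lfStep
    rw [h1]
    have : 0 ≤ (lam/2) * (ρ (0 - 1) * discConv ℓ γ ρ (0 - 1)) :=
      mul_nonneg (by linarith) (mul_nonneg (hρ_nonneg _) hc)
    have h01 : (0:ℤ) - 1 = -1 := by ring
    rw [h01] at this ⊢
    nlinarith
  · linarith
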